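/- If P is a Boolean lattice (the poset of subsets of a finite set of size d, ordered by inclusion), then G(P,t) = 1. -/
import Mathlib


open Polynomial
open scoped Classical

noncomputable section

/-- Truncation operator `τ_{<d/2}`: keep only terms of degree `i` with `2*i < d`. -/
def truncHalf (d : ℕ) (p : Polynomial ℤ) : Polynomial ℤ :=
  ∑ i ∈ Finset.range ((d + 1) / 2), Polynomial.C (p.coeff i) * Polynomial.X ^ i

variable {α : Type*} [Fintype α] [PartialOrder α] [BoundedOrder α]

/-- `rk` is the rank function of a (finite, bounded) graded Eulerian poset. -/
structure EulerianRank (rk : α → ℕ) : Prop where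
  rk_bot : rk ⊥ = 0
  rk_covby : ∀ a b : α, a ⋖ b → rk b = rk a + 1
  eulerian : ∀ a b : α, a < b →
    (Finset.univ.filter fun z => a ≤ z ∧ z ≤ b ∧ Even (rk z)).card =
    (Finset.univ.filter fun z => a ≤ z ∧ z ≤ b ∧ ¬ Even (rk z)).card

/-- `G a b` and `H a b` satisfy Stanley's defining recursion for the `G`- and
`H`-polynomials of each interval `[a,b]` of the poset. -/
structure IsGH (rk : α → ℕ) (G H : α → α → Polynomial ℤ) : Prop where
  G_refl : ∀ a : α, G a a = 1
  H_eq : ∀ a b : α, a < b →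
    H a b = ∑ x ∈ Finset.univ.filter (fun x => a < x ∧ x ≤ b),
      (Polynomial.X - 1) ^ (rk x - rk a - 1) * G x b
  G_eq : ∀ a b : α, a < b →
    G a b = truncHalf (rk b - rk a) ((1 - Polynomial.X) * H a b)

/-- `G a b` and `H a b` satisfy Stanley's defining recursion for the `G`- and
`H`-polynomials of the *dual* interval `[a,b]*`. -/
structure IsGHDual (rk : α → ℕ) (G H : α → α → Polynomial ℤ) : Prop where
  G_refl : ∀ a : α, G a a = 1
  H_eq : ∀ a b : α, a < b →
    H a b = ∑ x ∈ Finset.univ.filter (fun x => a ≤ x ∧ x < b),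
      (Polynomial.X - 1) ^ (rk b - rk x - 1) * G a x
  G_eq : ∀ a b : α, a < b →
    G a b = truncHalf (rk b - rk a) ((1 - Polynomial.X) * H a b)

end
/-- If `P` is a Boolean lattice (the poset of subsets of a finite
set of size `d`, ordered by inclusion), then `G(P,t) = 1`. -/
lemma auxA {β : Type*} [DecidableEq β] (A : Finset β) :
    ∑ u ∈ A.powerset, ((X : Polynomial ℤ) - 1) ^ u.card = X ^ A.card := by
  have h := Finset.prod_add (fun _ : β => (X : Polynomial ℤ) - 1) (fun _ => 1) A
  simp only [Finset.prod_const, one_pow, mul_one, sub_add_cancel] at h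
  rw [h]

lemma auxB (n : ℕ) (hn : 1 ≤ n) :
    truncHalf n (1 - X ^ n) = 1 := by
  unfold truncHalf
  rw [Finset.sum_eq_single 0]
  · simp [coeff_one, coeff_X_pow]
    omega
  · intro i hi hi0
    have hin : i < n := by
      have := Finset.mem_range.mp hi; omega
    simp [coeff_one, coeff_X_pow, hi0]
    omega
  · intro h
    exfalso; apply h; simp; omega

lemma key {β : Type*} [Fintype β] [DecidableEq β]
    (G H : Finset β → Finset β → Polynomial ℤ)
    (hGH : IsGH (fun s : Finset β => s.card) G H) :
    ∀ n : ℕ, ∀ s t : Finset β, s ≤ t → (t \ s).card = n → G s t = 1 := by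
  intro n
  induction n using Nat.strong_induction_on with
  | _ n IH =>
  intro s t hst hcard
  rcases eq_or_lt_of_le hst with rfl | hlt
  · exact hGH.G_refl s
  · have hsub : s ⊆ t := hst
    have hcard' : (t \ s).card = t.card - s.card := Finset.card_sdiff_of_subset hsub
    have hslt : s.card < t.card := Finset.card_lt_card hlt
    have hn1 : 1 ≤ n := by omega
    have hIH : ∀ x : Finset β, s < x → x ≤ t → G x t = 1 := by
      intro x hsx hxt
      have h1 : s.card < x.card := Finset.card_lt_card hsx
      have h2 : x.card ≤ t.card := Finset.card_le_card hxt
      exact IH ((t \ x).card) (by rw [Finset.card_sdiff_of_subset hxt]; omega) x t hxt rfl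
    rw [hGH.G_eq s t hlt, hGH.H_eq s t hlt]
    have hrk : t.card - s.card = n := by omega
    simp only [hrk]
    have hset : (Finset.univ.filter (fun x : Finset β => s ≤ x ∧ x ≤ t))
        = insert s (Finset.univ.filter (fun x : Finset β => s < x ∧ x ≤ t)) := by
      ext x
      simp only [Finset.mem_filter, Finset.mem_insert, Finset.mem_univ, true_and]
      constructor
      · rintro ⟨h1, h2⟩
        rcases eq_or_lt_of_le h1 with rfl | h
        · exact Or.inl rfl
        · exact Or.inr ⟨h, h2⟩
      · rintro (rfl | ⟨h1, h2⟩)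
        · exact ⟨le_rfl, hst⟩
        · exact ⟨le_of_lt h1, h2⟩
    have hbij : ∑ x ∈ Finset.univ.filter (fun x : Finset β => s ≤ x ∧ x ≤ t),
        ((X : Polynomial ℤ) - 1) ^ (x.card - s.card) = X ^ n := by
      rw [← hcard, ← auxA (t \ s)]
      apply Finset.sum_bij' (fun (x : Finset β) (_ : x ∈ _) => x \ s)
        (fun (u : Finset β) (_ : u ∈ _) => u ∪ s)
      · intro x hx
        obtain ⟨-, h1, h2⟩ := Finset.mem_filter.mp hx
        exact Finset.mem_powerset.mpr (Finset.sdiff_subset_sdiff h2 le_rfl)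
      · intro u hu
        have hu' : u ⊆ t \ s := Finset.mem_powerset.mp hu
        refine Finset.mem_filter.mpr ⟨Finset.mem_univ _, Finset.subset_union_right, ?_⟩
        exact Finset.union_subset (hu'.trans Finset.sdiff_subset) hsub
      · intro x hx
        obtain ⟨-, h1, h2⟩ := Finset.mem_filter.mp hx
        exact Finset.sdiff_union_of_subset h1
      · intro u hu
        have hu' : u ⊆ t \ s := Finset.mem_powerset.mp hu
        have hdisj : Disjoint u s :=
          Finset.disjoint_of_subset_left hu' Finset.sdiff_disjoint
        rw [Finset.union_sdiff_right, Finset.sdiff_eq_self_of_disjoint hdisj]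
      · intro x hx
        obtain ⟨-, h1, h2⟩ := Finset.mem_filter.mp hx
        rw [Finset.card_sdiff_of_subset h1]
    rw [hset, Finset.sum_insert (by simp only [Finset.mem_filter]; exact fun h => absurd h.2.1 (lt_irrefl s))] at hbij
    simp only [Nat.sub_self, pow_zero] at hbij
    have hF : ∑ x ∈ Finset.univ.filter (fun x : Finset β => s < x ∧ x ≤ t),
        ((X : Polynomial ℤ) - 1) ^ (x.card - s.card) = X ^ n - 1 := by
      linear_combination hbij
    have hmul : (1 - (X : Polynomial ℤ)) *
        ∑ x ∈ Finset.univ.filter (fun x : Finset β => s < x ∧ x ≤ t),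
          ((X : Polynomial ℤ) - 1) ^ (x.card - s.card - 1) * G x t = 1 - X ^ n := by
      rw [Finset.mul_sum]
      have : ∀ x ∈ Finset.univ.filter (fun x : Finset β => s < x ∧ x ≤ t),
          (1 - (X : Polynomial ℤ)) * ((X - 1) ^ (x.card - s.card - 1) * G x t)
            = -((X - 1) ^ (x.card - s.card)) := by
        intro x hx
        obtain ⟨-, h1, h2⟩ := Finset.mem_filter.mp hx
        have h3 : s.card < x.card := Finset.card_lt_card h1
        have h4 : x.card - s.card - 1 + 1 = x.card - s.card := by omega
        have h5 : ((X : Polynomial ℤ) - 1) ^ (x.card - s.card)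
            = (X - 1) ^ (x.card - s.card - 1) * (X - 1) := by
          rw [← pow_succ, h4]
        rw [hIH x h1 h2, mul_one, h5]
        ring
      rw [Finset.sum_congr rfl this, Finset.sum_neg_distrib, hF]
      ring
    convert auxB n hn1 using 2
    rw [← hmul]
    congr 1
    refine Finset.sum_congr ?_ (fun x _ => rfl)
    ext x
    simp only [Finset.mem_filter]

theorem stmt5 {β : Type*} [Fintype β] [DecidableEq β]
    (G H : Finset β → Finset β → Polynomial ℤ)
    (hGH : IsGH (fun s : Finset β => s.card) G H) :
    G (⊥ : Finset β) (⊤ : Finset β) = 1 :=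
  key G H hGH _ ⊥ ⊤ bot_le rfl
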